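/- Let w be a selection convex cooperative interval game on a finite player set N. Then for every selection v of w, the Shapley value vector φ(v) = (φ_i(v))_{i∈N} belongs to the selection core SC(w); in particular φ(v) ∈ C(v). -/

import Mathlib

open Finset

variable {N : Type*} [Fintype N] [DecidableEq N]

/-- A cooperative interval game, given by its lower and upper border games. -/
def IsIntervalGame (wl wu : Finset N → ℝ) : Prop :=
  (∀ S, wl S ≤ wu S) ∧ wl ∅ = 0 ∧ wu ∅ = 0

/-- A selection of the interval game `(wl, wu)`. -/
def IsSelection (wl wu v : Finset N → ℝ) : Prop :=
  v ∅ = 0 ∧ ∀ S, wl S ≤ v S ∧ v S ≤ wu S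

/-- Convexity (supermodularity) of a cooperative game. -/
def IsConvexGame (v : Finset N → ℝ) : Prop :=
  ∀ S T, v S + v T ≤ v (S ∪ T) + v (S ∩ T)

/-- Membership of a payoff vector in the core of a cooperative game. -/
def InCore (v : Finset N → ℝ) (x : N → ℝ) : Prop :=
  (∑ i, x i) = v Finset.univ ∧ ∀ S : Finset N, v S ≤ ∑ i ∈ S, x i

/-- The selection core of an interval game. -/
def selectionCore (wl wu : Finset N → ℝ) : Set (N → ℝ) :=
  {x | ∃ v, IsSelection wl wu v ∧ InCore v x}

/-- `gen` of the interval core of an interval game: all real payoff vectors generated by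
some element `(X i)_{i}` (given by lower bounds `Xl` and upper bounds `Xu`) of the interval core. -/
def genIntervalCore (wl wu : Finset N → ℝ) : Set (N → ℝ) :=
  {x | ∃ Xl Xu : N → ℝ, (∀ i, Xl i ≤ Xu i) ∧
    (∑ i, Xl i) = wl Finset.univ ∧ (∑ i, Xu i) = wu Finset.univ ∧
    (∀ S : Finset N, S.Nonempty → wl S ≤ ∑ i ∈ S, Xl i ∧ wu S ≤ ∑ i ∈ S, Xu i) ∧
    ∀ i, Xl i ≤ x i ∧ x i ≤ Xu i}

/-- The Shapley coefficient `|S|! (n - |S| - 1)! / n!`. -/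
noncomputable def shapleyCoeff (n k : ℕ) : ℝ :=
  (Nat.factorial k * Nat.factorial (n - k - 1) : ℝ) / (Nat.factorial n : ℝ)

/-- The Shapley value of a cooperative game. -/
noncomputable def shapley (v : Finset N → ℝ) (i : N) : ℝ :=
  ∑ S ∈ (Finset.univ.erase i).powerset,
    shapleyCoeff (Fintype.card N) S.card * (v (insert i S) - v S)

/-- Lower endpoint of the interval Shapley value extension `Φ*`. -/
noncomputable def phiLow (wl wu : Finset N → ℝ) (i : N) : ℝ :=
  ∑ S ∈ (Finset.univ.erase i).powerset,
    shapleyCoeff (Fintype.card N) S.card * (wl (insert i S) - wu S)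

/-- Upper endpoint of the interval Shapley value extension `Φ*`. -/
noncomputable def phiHigh (wl wu : Finset N → ℝ) (i : N) : ℝ :=
  ∑ S ∈ (Finset.univ.erase i).powerset,
    shapleyCoeff (Fintype.card N) S.card * (wu (insert i S) - wl S)


set_option linter.unusedSectionVars false

def predF {n : ℕ} (π : Fin n ≃ N) (i : N) : Finset N :=
  Finset.univ.filter (fun j => π.symm j < π.symm i)

lemma not_mem_predF {n : ℕ} (π : Fin n ≃ N) (i : N) : i ∉ predF π i := by
  simp [predF]

noncomputable def marg {n : ℕ} (v : Finset N → ℝ) (π : Fin n ≃ N) (i : N) : ℝ :=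
  v (insert i (predF π i)) - v (predF π i)

lemma margMono {v : Finset N → ℝ} (hv : IsConvexGame v) {A B : Finset N} {i : N}
    (hAB : A ⊆ B) (hiB : i ∉ B) :
    v (insert i A) - v A ≤ v (insert i B) - v B := by
  have h := hv (insert i A) B
  have h1 : insert i A ∪ B = insert i B := by
    rw [Finset.insert_union, Finset.union_eq_right.mpr hAB]
  have h2 : insert i A ∩ B = A := by
    rw [Finset.insert_inter_of_notMem hiB, Finset.inter_eq_left.mpr hAB]
  rw [h1, h2] at h
  linarith

lemma le_sum_marg {v : Finset N → ℝ} (hv : IsConvexGame v) (hv0 : v ∅ = 0)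
    {n : ℕ} (π : Fin n ≃ N) (S : Finset N) :
    v S ≤ ∑ i ∈ S, marg v π i := by
  induction S using Finset.strongInduction with
  | _ S ih =>
    rcases S.eq_empty_or_nonempty with rfl | hne
    · simp [hv0]
    · obtain ⟨i, hiS, hmax⟩ := S.exists_max_image (fun j => π.symm j) hne
      have hsub : S.erase i ⊆ predF π i := by
        intro j hj
        rw [Finset.mem_erase] at hj
        simp only [predF, Finset.mem_filter, Finset.mem_univ, true_and]
        exact lt_of_le_of_ne (hmax j hj.2) (fun h => hj.1 (π.symm.injective h))
      have hkey : v (insert i (S.erase i)) - v (S.erase i) ≤ marg v π i :=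
        margMono hv hsub (not_mem_predF π i)
      rw [Finset.insert_erase hiS] at hkey
      have hIH := ih (S.erase i) (Finset.erase_ssubset hiS)
      rw [← Finset.sum_erase_add S _ hiS]
      linarith

def upTo {n : ℕ} (π : Fin n ≃ N) (t : ℕ) : Finset N :=
  Finset.univ.filter (fun j => (π.symm j : ℕ) < t)

lemma predF_eq_upTo {n : ℕ} (π : Fin n ≃ N) (m : Fin n) :
    predF π (π m) = upTo π m.val := by
  ext j
  simp only [predF, upTo, Finset.mem_filter, Finset.mem_univ, true_and,
    Equiv.symm_apply_apply, Fin.lt_def]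

lemma insert_predF_eq_upTo {n : ℕ} (π : Fin n ≃ N) (m : Fin n) :
    insert (π m) (predF π (π m)) = upTo π (m.val + 1) := by
  ext j
  rw [Finset.mem_insert, predF_eq_upTo]
  simp only [upTo, Finset.mem_filter, Finset.mem_univ, true_and]
  constructor
  · rintro (rfl | hj)
    · simp
    · omega
  · intro hj
    rcases Nat.lt_succ_iff_lt_or_eq.mp hj with hj | hj
    · exact Or.inr hj
    · left
      have : π.symm j = m := Fin.ext hj
      rw [← this, Equiv.apply_symm_apply]

lemma sum_marg_univ {v : Finset N → ℝ} (hv0 : v ∅ = 0) {n : ℕ}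
    (π : Fin n ≃ N) : ∑ i, marg v π i = v Finset.univ := by
  rw [← Equiv.sum_comp π (marg v π)]
  calc ∑ m : Fin n, marg v π (π m)
      = ∑ m : Fin n, (v (upTo π (m.val + 1)) - v (upTo π m.val)) := by
        exact Finset.sum_congr rfl fun m _ => by
          rw [marg, insert_predF_eq_upTo, predF_eq_upTo]
    _ = ∑ t ∈ Finset.range n, (v (upTo π (t + 1)) - v (upTo π t)) :=
        Fin.sum_univ_eq_sum_range (fun t => v (upTo π (t + 1)) - v (upTo π t)) n
    _ = v (upTo π n) - v (upTo π 0) := Finset.sum_range_sub (fun t => v (upTo π t)) n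
    _ = v Finset.univ := by
        have hAn : upTo π n = Finset.univ := by
          ext j; simp [upTo, (π.symm j).isLt]
        have hA0 : upTo π 0 = ∅ := by
          ext j; simp [upTo]
        rw [hAn, hA0, hv0, sub_zero]

def glue {n : ℕ} (i : N) (S : Finset N) (hi : i ∉ S)
    (hn : S.card + 1 + (Finset.univ \ insert i S).card = n)
    (a : Fin S.card ≃ {x // x ∈ S})
    (b : Fin (Finset.univ \ insert i S).card ≃ {x // x ∈ Finset.univ \ insert i S}) :
    Fin n ≃ N where
  toFun m :=
    if h : m.val < S.card then (a ⟨m.val, h⟩ : N)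
    else if h2 : m.val = S.card then i
    else (b ⟨m.val - S.card - 1, by have := m.isLt; omega⟩ : N)
  invFun j :=
    if h : j ∈ S then ⟨(a.symm ⟨j, h⟩).val, by have := (a.symm ⟨j, h⟩).isLt; omega⟩
    else if h2 : j = i then ⟨S.card, by omega⟩
    else ⟨S.card + 1 +
        (b.symm ⟨j, by simp [Finset.mem_sdiff, Finset.mem_insert, h, h2]⟩).val,
      by have := (b.symm ⟨j, by simp [Finset.mem_sdiff, Finset.mem_insert, h, h2]⟩).isLt; omega⟩
  left_inv := by
    intro m
    by_cases h : m.val < S.card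
    · simp only [dif_pos h]
      have hmem : ((a ⟨m.val, h⟩ : {x // x ∈ S}) : N) ∈ S := (a ⟨m.val, h⟩).2
      simp only [dif_pos hmem]
      apply Fin.ext
      simp
    · by_cases h2 : m.val = S.card
      · simp only [dif_neg h, dif_pos h2, dif_neg hi, dif_pos rfl]
        exact Fin.ext h2.symm
      · simp only [dif_neg h, dif_neg h2]
        have hmem := (b ⟨m.val - S.card - 1, by have := m.isLt; omega⟩).2
        rw [Finset.mem_sdiff, Finset.mem_insert] at hmem
        push_neg at hmem
        simp only [dif_neg hmem.2.2, dif_neg hmem.2.1]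
        apply Fin.ext
        simp only []
        have heta : (⟨((b ⟨m.val - S.card - 1, by have := m.isLt; omega⟩ : {x // x ∈ Finset.univ \ insert i S}) : N), by
            simp [Finset.mem_sdiff, Finset.mem_insert, hmem.2.1, hmem.2.2]⟩ :
            {x // x ∈ Finset.univ \ insert i S}) =
            b ⟨m.val - S.card - 1, by have := m.isLt; omega⟩ := Subtype.ext rfl
        rw [heta, Equiv.symm_apply_apply]
        have := m.isLt
        simp
        omega
  right_inv := by
    intro j
    by_cases h : j ∈ S
    · simp only [dif_pos h]
      have hlt : (a.symm ⟨j, h⟩).val < S.card := (a.symm ⟨j, h⟩).isLt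
      simp only [dif_pos hlt]
      have : (⟨(a.symm ⟨j, h⟩).val, hlt⟩ : Fin S.card) = a.symm ⟨j, h⟩ := rfl
      rw [this, Equiv.apply_symm_apply]
    · by_cases h2 : j = i
      · subst h2
        simp only [dif_neg h, dif_pos rfl]
        simp
      · simp only [dif_neg h, dif_neg h2]
        have hb := (b.symm ⟨j, by simp [Finset.mem_sdiff, Finset.mem_insert, h, h2]⟩).isLt
        have hc1 : ¬ (S.card + 1 + (b.symm ⟨j, by
            simp [Finset.mem_sdiff, Finset.mem_insert, h, h2]⟩).val < S.card) := by omega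
        have hc2 : ¬ (S.card + 1 + (b.symm ⟨j, by
            simp [Finset.mem_sdiff, Finset.mem_insert, h, h2]⟩).val = S.card) := by omega
        simp only [dif_neg hc1, dif_neg hc2]
        have hidx : (⟨S.card + 1 + (b.symm ⟨j, by
            simp [Finset.mem_sdiff, Finset.mem_insert, h, h2]⟩).val - S.card - 1, by omega⟩ :
            Fin (Finset.univ \ insert i S).card) =
            b.symm ⟨j, by simp [Finset.mem_sdiff, Finset.mem_insert, h, h2]⟩ := by
          apply Fin.ext; simp; omega
        rw [hidx, Equiv.apply_symm_apply]

lemma glue_symm_apply_i {n : ℕ} (i : N) (S : Finset N) (hi : i ∉ S)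
    (hn : S.card + 1 + (Finset.univ \ insert i S).card = n)
    (a : Fin S.card ≃ {x // x ∈ S})
    (b : Fin (Finset.univ \ insert i S).card ≃ {x // x ∈ Finset.univ \ insert i S}) :
    ((glue i S hi hn a b).symm i : ℕ) = S.card := by
  simp only [glue, Equiv.coe_fn_symm_mk, dif_neg hi, dif_pos rfl]
  simp

lemma predF_glue {n : ℕ} (i : N) (S : Finset N) (hi : i ∉ S)
    (hn : S.card + 1 + (Finset.univ \ insert i S).card = n)
    (a : Fin S.card ≃ {x // x ∈ S})
    (b : Fin (Finset.univ \ insert i S).card ≃ {x // x ∈ Finset.univ \ insert i S}) :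
    predF (glue i S hi hn a b) i = S := by
  ext j
  simp only [predF, Finset.mem_filter, Finset.mem_univ, true_and, Fin.lt_def,
    glue_symm_apply_i]
  by_cases h : j ∈ S
  · simp only [glue, Equiv.coe_fn_symm_mk, dif_pos h]
    exact iff_of_true (a.symm ⟨j, h⟩).isLt h
  · by_cases h2 : j = i
    · subst h2
      simp only [glue, Equiv.coe_fn_symm_mk, dif_neg h, dif_pos rfl]
      exact iff_of_false (lt_irrefl _) h
    · simp only [glue, Equiv.coe_fn_symm_mk, dif_neg h, dif_neg h2]
      exact iff_of_false (by omega) h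

lemma symm_val_of_predF {n : ℕ} (π : Fin n ≃ N) (i : N) :
    ((π.symm i : Fin n) : ℕ) = (predF π i).card := by
  have himg : predF π i = (Finset.Iio (π.symm i)).image ⇑π := by
    ext j
    simp only [predF, Finset.mem_filter, Finset.mem_univ, true_and, Finset.mem_image,
      Finset.mem_Iio]
    constructor
    · intro h; exact ⟨π.symm j, h, π.apply_symm_apply j⟩
    · rintro ⟨m, hm, rfl⟩; rwa [Equiv.symm_apply_apply]
  rw [himg, Finset.card_image_of_injective _ π.injective, Fin.card_Iio]

lemma card_fiber (i : N) (S : Finset N) (hS : S ⊆ Finset.univ.erase i) :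
    ((Finset.univ : Finset (Fin (Fintype.card N) ≃ N)).filter
        (fun π => predF π i = S)).card
      = S.card.factorial * (Fintype.card N - S.card - 1).factorial := by
  classical
  have hi : i ∉ S := fun h => by simpa using hS h
  have hsn : S.card + 1 ≤ Fintype.card N := by
    have h1 : (insert i S).card ≤ Fintype.card N := by
      rw [← Finset.card_univ]; exact Finset.card_le_card (Finset.subset_univ _)
    rwa [Finset.card_insert_of_notMem hi] at h1
  have hk : (Finset.univ \ insert i S).card = Fintype.card N - S.card - 1 := by
    rw [Finset.card_sdiff_of_subset (Finset.subset_univ _), Finset.card_univ,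
      Finset.card_insert_of_notMem hi]
    omega
  have hn : S.card + 1 + (Finset.univ \ insert i S).card = Fintype.card N := by omega
  have hmem : ∀ p ∈ (Finset.univ : Finset ((Fin S.card ≃ {x // x ∈ S}) ×
      (Fin (Finset.univ \ insert i S).card ≃ {x // x ∈ Finset.univ \ insert i S}))),
      glue i S hi hn p.1 p.2 ∈ (Finset.univ : Finset (Fin (Fintype.card N) ≃ N)).filter
        (fun π => predF π i = S) := by
    intro p _
    exact Finset.mem_filter.mpr ⟨Finset.mem_univ _, predF_glue i S hi hn p.1 p.2⟩
  have hinj : ∀ p ∈ (Finset.univ : Finset ((Fin S.card ≃ {x // x ∈ S}) ×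
      (Fin (Finset.univ \ insert i S).card ≃ {x // x ∈ Finset.univ \ insert i S}))),
      ∀ q ∈ Finset.univ, glue i S hi hn p.1 p.2 = glue i S hi hn q.1 q.2 → p = q := by
    intro p _ q _ hpq
    have ha : p.1 = q.1 := by
      apply Equiv.ext
      intro x
      have hx : (x : ℕ) < Fintype.card N := by have := x.isLt; omega
      have h := congrArg (fun e : Fin (Fintype.card N) ≃ N => e ⟨x.val, hx⟩) hpq
      simp only [glue, Equiv.coe_fn_mk] at h
      rw [dif_pos (show ((⟨x.val, hx⟩ : Fin (Fintype.card N)) : ℕ) < S.card from x.isLt),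
        dif_pos (show ((⟨x.val, hx⟩ : Fin (Fintype.card N)) : ℕ) < S.card from x.isLt)] at h
      apply Subtype.ext
      simpa [Fin.eta] using h
    have hb : p.2 = q.2 := by
      apply Equiv.ext
      intro x
      have hx : S.card + 1 + (x : ℕ) < Fintype.card N := by have := x.isLt; omega
      have h := congrArg (fun e : Fin (Fintype.card N) ≃ N => e ⟨S.card + 1 + x.val, hx⟩) hpq
      simp only [glue, Equiv.coe_fn_mk] at h
      rw [dif_neg (show ¬ ((⟨S.card + 1 + x.val, hx⟩ : Fin (Fintype.card N)) : ℕ) < S.card by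
            simp; omega),
        dif_neg (show ¬ ((⟨S.card + 1 + x.val, hx⟩ : Fin (Fintype.card N)) : ℕ) < S.card by
            simp; omega),
        dif_neg (show ¬ ((⟨S.card + 1 + x.val, hx⟩ : Fin (Fintype.card N)) : ℕ) = S.card by
            simp; omega),
        dif_neg (show ¬ ((⟨S.card + 1 + x.val, hx⟩ : Fin (Fintype.card N)) : ℕ) = S.card by
            simp; omega)] at h
      apply Subtype.ext
      have hidx : (⟨((⟨S.card + 1 + x.val, hx⟩ : Fin (Fintype.card N)) : ℕ) - S.card - 1,
          by have := x.isLt; simp; omega⟩ : Fin (Finset.univ \ insert i S).card) = x := by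
        apply Fin.ext; simp; omega
      rwa [hidx] at h
    exact Prod.ext ha hb
  have hsurj : ∀ π ∈ (Finset.univ : Finset (Fin (Fintype.card N) ≃ N)).filter
      (fun π => predF π i = S), ∃ p, ∃ hp : p ∈ (Finset.univ : Finset ((Fin S.card ≃ {x // x ∈ S}) ×
      (Fin (Finset.univ \ insert i S).card ≃ {x // x ∈ Finset.univ \ insert i S}))),
      glue i S hi hn p.1 p.2 = π := by
    intro π hπ
    rw [Finset.mem_filter] at hπ
    have hpred := hπ.2
    have hpos : ((π.symm i : Fin (Fintype.card N)) : ℕ) = S.card := by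
      rw [symm_val_of_predF, hpred]
    have hchar : ∀ j, j ∈ S ↔ ((π.symm j : Fin (Fintype.card N)) : ℕ) < S.card := by
      intro j
      conv_lhs => rw [← hpred]
      simp only [predF, Finset.mem_filter, Finset.mem_univ, true_and, Fin.lt_def, hpos]
    -- construct a
    have hmemS : ∀ x : Fin S.card, π (Fin.castLE (by omega) x) ∈ S := by
      intro x
      apply (hchar _).mpr
      simp only [Equiv.symm_apply_apply]
      simpa using x.isLt
    have hbija : Function.Bijective (fun x : Fin S.card =>
        (⟨π (Fin.castLE (by omega) x), hmemS x⟩ : {x // x ∈ S})) := by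
      rw [Fintype.bijective_iff_injective_and_card]
      constructor
      · intro x y hxy
        have := π.injective (congrArg Subtype.val hxy)
        exact Fin.castLE_injective _ this
      · rw [Fintype.card_fin, Fintype.card_coe]
    have hmemT : ∀ x : Fin (Finset.univ \ insert i S).card,
        π ⟨S.card + 1 + x.val, by have := x.isLt; omega⟩ ∈ Finset.univ \ insert i S := by
      intro x
      rw [Finset.mem_sdiff, Finset.mem_insert]
      refine ⟨Finset.mem_univ _, ?_⟩
      push_neg
      constructor
      · intro hji
        have : π.symm (π ⟨S.card + 1 + x.val, by have := x.isLt; omega⟩) = π.symm i := by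
          rw [hji]
        rw [Equiv.symm_apply_apply] at this
        have hv := congrArg Fin.val this
        rw [hpos] at hv
        simp at hv
        omega
      · intro hjS
        have h2 := (hchar _).mp hjS
        simp only [Equiv.symm_apply_apply] at h2
        omega
    have hbijb : Function.Bijective (fun x : Fin (Finset.univ \ insert i S).card =>
        (⟨π ⟨S.card + 1 + x.val, by have := x.isLt; omega⟩, hmemT x⟩ :
          {x // x ∈ Finset.univ \ insert i S})) := by
      rw [Fintype.bijective_iff_injective_and_card]
      constructor
      · intro x y hxy
        have h2 := π.injective (congrArg Subtype.val hxy)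
        have h3 := congrArg Fin.val h2
        simp at h3
        exact Fin.ext h3
      · rw [Fintype.card_fin, Fintype.card_coe]
    refine ⟨⟨Equiv.ofBijective _ hbija, Equiv.ofBijective _ hbijb⟩, Finset.mem_univ _, ?_⟩
    apply Equiv.ext
    intro m
    simp only [glue, Equiv.coe_fn_mk]
    by_cases h : (m : ℕ) < S.card
    · rw [dif_pos h]
      simp only [Equiv.ofBijective_apply]
      have : Fin.castLE (show S.card ≤ Fintype.card N by omega) ⟨(m : ℕ), h⟩ = m :=
        Fin.ext rfl
      rw [this]
    · by_cases h2 : (m : ℕ) = S.card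
      · rw [dif_neg h, dif_pos h2]
        have : π.symm i = m := Fin.ext (by rw [hpos, h2])
        rw [← this, Equiv.apply_symm_apply]
      · rw [dif_neg h, dif_neg h2]
        simp only [Equiv.ofBijective_apply]
        congr 1
        apply Fin.ext
        simp
        omega
  have hbij := Finset.card_bij
    (fun (p : (Fin S.card ≃ {x // x ∈ S}) ×
        (Fin (Finset.univ \ insert i S).card ≃ {x // x ∈ Finset.univ \ insert i S}))
      (_ : p ∈ Finset.univ) => glue i S hi hn p.1 p.2) hmem hinj hsurj
  rw [← hbij, Finset.card_univ, Fintype.card_prod,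
    Fintype.card_equiv (Fintype.equivFinOfCardEq (Fintype.card_coe S)).symm,
    Fintype.card_equiv (Fintype.equivFinOfCardEq (Fintype.card_coe
      (Finset.univ \ insert i S))).symm,
    Fintype.card_fin, Fintype.card_fin, hk]

lemma sum_marg_eq (v : Finset N → ℝ) (i : N) :
    ∑ π : Fin (Fintype.card N) ≃ N, marg v π i
      = (Fintype.card N).factorial * shapley v i := by
  classical
  have hmaps : ∀ π : Fin (Fintype.card N) ≃ N, π ∈ Finset.univ →
      predF π i ∈ (Finset.univ.erase i).powerset := by
    intro π _
    rw [Finset.mem_powerset]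
    intro j hj
    simp only [predF, Finset.mem_filter, Finset.mem_univ, true_and] at hj
    rw [Finset.mem_erase]
    exact ⟨fun h => absurd (h ▸ hj) (lt_irrefl _), Finset.mem_univ j⟩
  rw [← Finset.sum_fiberwise_of_maps_to hmaps (fun π => marg v π i)]
  rw [shapley, Finset.mul_sum]
  apply Finset.sum_congr rfl
  intro S hS
  rw [Finset.mem_powerset] at hS
  have hcongr : ∀ π ∈ Finset.univ.filter
      (fun π : Fin (Fintype.card N) ≃ N => predF π i = S),
      marg v π i = v (insert i S) - v S := by
    intro π hπ
    rw [Finset.mem_filter] at hπ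
    rw [marg, hπ.2]
  rw [Finset.sum_congr rfl hcongr, Finset.sum_const, card_fiber i S hS, nsmul_eq_mul,
    shapleyCoeff]
  have hne : ((Fintype.card N).factorial : ℝ) ≠ 0 :=
    Nat.cast_ne_zero.mpr (Nat.factorial_ne_zero _)
  push_cast
  field_simp

theorem shapley_of_selection_in_selection_core (wl wu : Finset N → ℝ)
    (hw : IsIntervalGame wl wu)
    (hconv : ∀ v, IsSelection wl wu v → IsConvexGame v)
    (v : Finset N → ℝ) (hv : IsSelection wl wu v) :
    (fun i => shapley v i) ∈ selectionCore wl wu ∧ InCore v (fun i => shapley v i) := by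
  classical
  have hvc : IsConvexGame v := hconv v hv
  have hv0 : v ∅ = 0 := hv.1
  have hcard : ((Finset.univ : Finset (Fin (Fintype.card N) ≃ N))).card
      = (Fintype.card N).factorial := by
    rw [Finset.card_univ, Fintype.card_equiv (Fintype.equivFin N).symm, Fintype.card_fin]
  have hfpos : (0 : ℝ) < ((Fintype.card N).factorial : ℝ) :=
    Nat.cast_pos.mpr (Nat.factorial_pos _)
  have heff : (∑ i, shapley v i) = v Finset.univ := by
    have h1 : ((Fintype.card N).factorial : ℝ) * ∑ i, shapley v i
        = ∑ i, ∑ π : Fin (Fintype.card N) ≃ N, marg v π i := by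
      rw [Finset.mul_sum]
      exact Finset.sum_congr rfl fun i _ => (sum_marg_eq v i).symm
    rw [Finset.sum_comm] at h1
    have h2 : ∀ π : Fin (Fintype.card N) ≃ N, π ∈ Finset.univ →
        (∑ i, marg v π i) = v Finset.univ := fun π _ => sum_marg_univ hv0 π
    rw [Finset.sum_congr rfl h2, Finset.sum_const, hcard, nsmul_eq_mul] at h1
    exact mul_left_cancel₀ (ne_of_gt hfpos) h1
  have hineq : ∀ S : Finset N, v S ≤ ∑ i ∈ S, shapley v i := by
    intro S
    have h1 : ((Fintype.card N).factorial : ℝ) * ∑ i ∈ S, shapley v i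
        = ∑ π : Fin (Fintype.card N) ≃ N, ∑ i ∈ S, marg v π i := by
      rw [Finset.mul_sum, Finset.sum_congr rfl fun i _ => (sum_marg_eq v i).symm,
        Finset.sum_comm]
    have h2 : ((Fintype.card N).factorial : ℝ) * v S
        ≤ ∑ π : Fin (Fintype.card N) ≃ N, ∑ i ∈ S, marg v π i := by
      calc ((Fintype.card N).factorial : ℝ) * v S
          = ∑ _π : Fin (Fintype.card N) ≃ N, v S := by
            rw [Finset.sum_const, hcard, nsmul_eq_mul]
        _ ≤ _ := Finset.sum_le_sum fun π _ => le_sum_marg hvc hv0 π S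
    rw [← h1] at h2
    exact (mul_le_mul_iff_right₀ hfpos).mp h2
  have hcore : InCore v (fun i => shapley v i) := ⟨heff, hineq⟩
  exact ⟨⟨v, hv, hcore⟩, hcore⟩
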